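/- For the full domain S = {0,1}³, the randomness complexity satisfies ρ(S) = 3: three independent uniform bits suffice (share each secret xᵢ as (Rᵢ, xᵢ ⊕ Rᵢ) placed on the two shares held by the parties other than/including Pᵢ appropriately), and no 3SS scheme for S uses fewer than 3 bits of randomness. -/

import Mathlib

open scoped Classical

/-- A distribution scheme: a distribution `pR` on a finite randomness set `R`
and a map producing three shares from a secret and the randomness. -/
structure Scheme (X A B C R : Type) [Fintype R] where
  pR : R → ℝ
  nonneg : ∀ r, 0 ≤ pR r
  sum_one : ∑ r, pR r = 1
  share : X → R → A × B × C

/-- Party `P₁`'s view: `(W₁₂, W₃₁)`. -/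
def view1 {A B C : Type} (w : A × B × C) : A × C := (w.1, w.2.2)
/-- Party `P₂`'s view: `(W₂₃, W₁₂)`. -/
def view2 {A B C : Type} (w : A × B × C) : B × A := (w.2.1, w.1)
/-- Party `P₃`'s view: `(W₃₁, W₂₃)`. -/
def view3 {A B C : Type} (w : A × B × C) : C × B := (w.2.2, w.2.1)

/-- Probability that party `P₁`'s pair of shares equals `v`, given the secret `x`. -/
noncomputable def probV1 {X A B C R : Type} [Fintype R] (sch : Scheme X A B C R)
    (x : X) (v : A × C) : ℝ :=
  ∑ r, if view1 (sch.share x r) = v then sch.pR r else 0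

/-- Probability that party `P₂`'s pair of shares equals `v`, given the secret `x`. -/
noncomputable def probV2 {X A B C R : Type} [Fintype R] (sch : Scheme X A B C R)
    (x : X) (v : B × A) : ℝ :=
  ∑ r, if view2 (sch.share x r) = v then sch.pR r else 0

/-- Probability that party `P₃`'s pair of shares equals `v`, given the secret `x`. -/
noncomputable def probV3 {X A B C R : Type} [Fintype R] (sch : Scheme X A B C R)
    (x : X) (v : C × B) : ℝ :=
  ∑ r, if view3 (sch.share x r) = v then sch.pR r else 0

/-- A distribution scheme is a 3SS scheme for domain `S`:
perfect correctness (each party reconstructs its secret coordinate from its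
pair of shares) and perfect privacy (the distribution of party `Pᵢ`'s pair of
shares depends on the secret vector only through coordinate `i`). -/
def Is3SS {X1 X2 X3 A B C R : Type} [Fintype R] (S : Set (X1 × X2 × X3))
    (sch : Scheme (X1 × X2 × X3) A B C R) : Prop :=
  (∃ φ1 : A × C → X1, ∀ x ∈ S, ∀ r, 0 < sch.pR r → φ1 (view1 (sch.share x r)) = x.1) ∧
  (∃ φ2 : B × A → X2, ∀ x ∈ S, ∀ r, 0 < sch.pR r → φ2 (view2 (sch.share x r)) = x.2.1) ∧
  (∃ φ3 : C × B → X3, ∀ x ∈ S, ∀ r, 0 < sch.pR r → φ3 (view3 (sch.share x r)) = x.2.2) ∧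
  (∀ x ∈ S, ∀ x' ∈ S, x.1 = x'.1 → ∀ v, probV1 sch x v = probV1 sch x' v) ∧
  (∀ x ∈ S, ∀ x' ∈ S, x.2.1 = x'.2.1 → ∀ v, probV2 sch x v = probV2 sch x' v) ∧
  (∀ x ∈ S, ∀ x' ∈ S, x.2.2 = x'.2.2 → ∀ v, probV3 sch x v = probV3 sch x' v)

/-- The randomness complexity `ρ(S)`: the infimum of `log₂ |R|` over all
3SS schemes for domain `S`. -/
noncomputable def rho {X1 X2 X3 : Type} (S : Set (X1 × X2 × X3)) : ℝ :=
  sInf { t : ℝ | ∃ (n : ℕ) (A B C : Type) (sch : Scheme (X1 × X2 × X3) A B C (Fin n)),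
    Is3SS S sch ∧ t = Real.logb 2 n }

-- generic lemmas
lemma sum_ite_eq_filter_sum {T : Type} {n : ℕ} (f : Fin n → T) (p : Fin n → ℝ)
    (Q : T → Prop) (V : Finset T) (hV : ∀ r, f r ∈ V) :
    (∑ r, if Q (f r) then p r else 0)
      = ∑ v ∈ V.filter Q, ∑ r, if f r = v then p r else 0 := by
  classical
  rw [Finset.sum_comm]
  refine Finset.sum_congr rfl fun r _ => ?_
  rw [Finset.sum_ite_eq]
  simp [Finset.mem_filter, hV r]

lemma event_transfer {T : Type} {n m : ℕ} (f : Fin n → T) (g : Fin m → T)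
    (p : Fin n → ℝ) (q : Fin m → ℝ)
    (h : ∀ v, (∑ r, if f r = v then p r else 0) = (∑ r, if g r = v then q r else 0))
    (Q : T → Prop) :
    (∑ r, if Q (f r) then p r else 0) = (∑ r, if Q (g r) then q r else 0) := by
  classical
  set V := (Finset.univ.image f) ∪ (Finset.univ.image g) with hVdef
  rw [sum_ite_eq_filter_sum f p Q V (by simp [hVdef]),
      sum_ite_eq_filter_sum g q Q V (by simp [hVdef])]
  exact Finset.sum_congr rfl fun v _ => h v

lemma sum_ite_mono {n : ℕ} (p : Fin n → ℝ) (hp : ∀ r, 0 ≤ p r) (P Q : Fin n → Prop)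
    (h : ∀ r, 0 < p r → P r → Q r) :
    (∑ r, if P r then p r else 0) ≤ (∑ r, if Q r then p r else 0) := by
  classical
  refine Finset.sum_le_sum fun r _ => ?_
  by_cases hP : P r
  · by_cases h0 : 0 < p r
    · simp [hP, h r h0 hP]
    · have : p r = 0 := le_antisymm (not_lt.1 h0) (hp r)
      simp [this]
  · simp only [hP, if_false]
    split
    · exact hp r
    · exact le_refl _

lemma ite_irrel {p : Prop} {i1 i2 : Decidable p} (a b : ℝ) :
    @ite ℝ p i1 a b = @ite ℝ p i2 a b := by
  cases Subsingleton.elim i1 i2; rfl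

section LB
variable {A B C : Type} {n : ℕ}

/-- probability of an event on the full share triple -/
noncomputable abbrev PrE (sch : Scheme (Bool × Bool × Bool) A B C (Fin n))
    (x : Bool × Bool × Bool) (E : A × B × C → Prop) : ℝ :=
  ∑ r, if E (sch.share x r) then sch.pR r else 0

lemma transfer1 (sch : Scheme (Bool × Bool × Bool) A B C (Fin n))
    (x x' : Bool × Bool × Bool) (h : ∀ v, probV1 sch x v = probV1 sch x' v)
    (Q : A × C → Prop) :
    PrE sch x (fun w => Q (view1 w)) = PrE sch x' (fun w => Q (view1 w)) := by
  classical
  refine event_transfer (fun r => view1 (sch.share x r)) (fun r => view1 (sch.share x' r))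
    sch.pR sch.pR (fun v => ?_) Q
  trans (probV1 sch x v)
  · exact Finset.sum_congr rfl fun r _ => ite_irrel _ _
  trans (probV1 sch x' v)
  · exact h v
  · exact Finset.sum_congr rfl fun r _ => ite_irrel _ _

lemma transfer2 (sch : Scheme (Bool × Bool × Bool) A B C (Fin n))
    (x x' : Bool × Bool × Bool) (h : ∀ v, probV2 sch x v = probV2 sch x' v)
    (Q : B × A → Prop) :
    PrE sch x (fun w => Q (view2 w)) = PrE sch x' (fun w => Q (view2 w)) := by
  classical
  refine event_transfer (fun r => view2 (sch.share x r)) (fun r => view2 (sch.share x' r))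
    sch.pR sch.pR (fun v => ?_) Q
  trans (probV2 sch x v)
  · exact Finset.sum_congr rfl fun r _ => ite_irrel _ _
  trans (probV2 sch x' v)
  · exact h v
  · exact Finset.sum_congr rfl fun r _ => ite_irrel _ _

lemma transfer3 (sch : Scheme (Bool × Bool × Bool) A B C (Fin n))
    (x x' : Bool × Bool × Bool) (h : ∀ v, probV3 sch x v = probV3 sch x' v)
    (Q : C × B → Prop) :
    PrE sch x (fun w => Q (view3 w)) = PrE sch x' (fun w => Q (view3 w)) := by
  classical
  refine event_transfer (fun r => view3 (sch.share x r)) (fun r => view3 (sch.share x' r))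
    sch.pR sch.pR (fun v => ?_) Q
  trans (probV3 sch x v)
  · exact Finset.sum_congr rfl fun r _ => ite_irrel _ _
  trans (probV3 sch x' v)
  · exact h v
  · exact Finset.sum_congr rfl fun r _ => ite_irrel _ _

lemma lower_bound (sch : Scheme (Bool × Bool × Bool) A B C (Fin n))
    (h : Is3SS (Set.univ) sch) : 8 ≤ n := by
  classical
  obtain ⟨⟨φ1, h1⟩, ⟨φ2, h2⟩, ⟨φ3, h3⟩, hp1, hp2, hp3⟩ := h
  simp only [Set.mem_univ, forall_true_left] at h1 h2 h3 hp1 hp2 hp3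
  have key : ∀ r0 : Fin n, sch.pR r0 ≤ 1/8 := by
    intro r0
    rcases (sch.nonneg r0).lt_or_eq with hpos | h0
    swap
    · rw [← h0]; norm_num
    set p := sch.pR r0 with hp
    set c := (sch.share (false, false, false) r0).2.2 with hc
    set b := (sch.share (false, false, false) r0).2.1 with hb
    -- Step A: for every secret x, Pr[W31 = c | x] ≥ 2p
    have claimA : ∀ x : Bool × Bool × Bool,
        2 * p ≤ PrE sch x (fun w => w.2.2 = c) := by
      rintro ⟨y1, z2, z3⟩
      have hA : ∀ y2 : Bool,
          p ≤ PrE sch (y1, z2, z3)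
            (fun w => (fun v : A × C => v.2 = c ∧ φ2 (b, v.1) = y2) (view1 w)) := by
        intro y2
        -- at secret 000, the event view3 = (c,b) has prob ≥ p
        have s0 : p ≤ PrE sch (false, false, false)
            (fun w => (fun v : C × B => v = (c, b)) (view3 w)) := by
          unfold PrE
          refine le_trans (le_of_eq ?_) (Finset.single_le_sum
            (fun r _ => by split; exacts [sch.nonneg r, le_refl 0]) (Finset.mem_univ r0))
          simp [view3, ← hc, ← hb]
          exact hp
        -- transfer to (y1, y2, false) via P3 privacy
        have s1 : p ≤ PrE sch (y1, y2, false)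
            (fun w => (fun v : C × B => v = (c, b)) (view3 w)) := by
          refine le_trans s0 (le_of_eq ?_)
          exact transfer3 sch _ _ (fun v => hp3 (false,false,false) (y1,y2,false) rfl v) (fun v => v = (c, b))
        -- monotone: on positive support the event implies the view1-event
        have s2 : p ≤ PrE sch (y1, y2, false)
            (fun w => (fun v : A × C => v.2 = c ∧ φ2 (b, v.1) = y2) (view1 w)) := by
          refine le_trans s1 (sum_ite_mono _ (fun r => sch.nonneg r) _ _ ?_)
          intro r hr hE
          simp only [view3, Prod.mk.injEq] at hE
          have hcor := h2 (y1, y2, false) r hr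
          simp only [view2] at hcor
          simp only [view1]
          exact ⟨hE.1, by rw [← hE.2]; exact hcor⟩
        -- transfer to (y1, z2, z3) via P1 privacy
        refine le_trans s2 (le_of_eq ?_)
        exact transfer1 sch _ _ (fun v => hp1 (y1,y2,false) (y1,z2,z3) rfl v) (fun v => v.2 = c ∧ φ2 (b, v.1) = y2)
      have hsum : PrE sch (y1, z2, z3)
            (fun w => (fun v : A × C => v.2 = c ∧ φ2 (b, v.1) = false) (view1 w))
          + PrE sch (y1, z2, z3)
            (fun w => (fun v : A × C => v.2 = c ∧ φ2 (b, v.1) = true) (view1 w))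
          ≤ PrE sch (y1, z2, z3) (fun w => w.2.2 = c) := by
        unfold PrE
        rw [← Finset.sum_add_distrib]
        refine Finset.sum_le_sum fun r _ => ?_
        set w := sch.share (y1, z2, z3) r
        by_cases hcc : w.2.2 = c
        · cases hφ : φ2 (b, w.1) <;> simp [view1, hcc, hφ]
        · simp [view1, hcc]
      calc 2 * p = p + p := by ring
        _ ≤ _ + _ := add_le_add (hA false) (hA true)
        _ ≤ _ := hsum
    -- Step B: transfer to secret 000 as view2 events labelled by (y1, y3)
    have claimB : ∀ y1 y3 : Bool,
        2 * p ≤ PrE sch (false, false, false)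
          (fun w => (fun v : B × A => φ3 (c, v.1) = y3 ∧ φ1 (v.2, c) = y1) (view2 w)) := by
      intro y1 y3
      have b1 : 2 * p ≤ PrE sch (y1, false, y3)
          (fun w => (fun v : B × A => φ3 (c, v.1) = y3 ∧ φ1 (v.2, c) = y1) (view2 w)) := by
        refine le_trans (claimA (y1, false, y3)) (sum_ite_mono _ (fun r => sch.nonneg r) _ _ ?_)
        intro r hr hE
        have hc3 := h3 (y1, false, y3) r hr
        have hc1 := h1 (y1, false, y3) r hr
        simp only [view3] at hc3
        simp only [view1] at hc1
        simp only [view2]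
        rw [hE] at hc3 hc1
        exact ⟨hc3, hc1⟩
      refine le_trans b1 (le_of_eq ?_)
      exact transfer2 sch _ _ (fun v => hp2 (y1,false,y3) (false,false,false) rfl v) (fun v => φ3 (c, v.1) = y3 ∧ φ1 (v.2, c) = y1)
    -- the four events are disjoint, so 8p ≤ 1
    have hfour : PrE sch (false,false,false)
          (fun w => (fun v : B × A => φ3 (c, v.1) = false ∧ φ1 (v.2, c) = false) (view2 w))
        + PrE sch (false,false,false)
          (fun w => (fun v : B × A => φ3 (c, v.1) = false ∧ φ1 (v.2, c) = true) (view2 w))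
        + PrE sch (false,false,false)
          (fun w => (fun v : B × A => φ3 (c, v.1) = true ∧ φ1 (v.2, c) = false) (view2 w))
        + PrE sch (false,false,false)
          (fun w => (fun v : B × A => φ3 (c, v.1) = true ∧ φ1 (v.2, c) = true) (view2 w))
        ≤ 1 := by
      unfold PrE
      rw [← Finset.sum_add_distrib, ← Finset.sum_add_distrib, ← Finset.sum_add_distrib]
      rw [← sch.sum_one]
      refine Finset.sum_le_sum fun r _ => ?_
      set w := sch.share (false,false,false) r
      cases hA : φ3 (c, (view2 w).1) <;> cases hB : φ1 ((view2 w).2, c) <;>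
        simp [hA, hB]
    have e1 := claimB false false
    have e2 := claimB true false
    have e3 := claimB false true
    have e4 := claimB true true
    linarith
  -- conclude n ≥ 8
  have h1 : (1:ℝ) ≤ (n : ℝ) * (1/8) := by
    calc (1:ℝ) = ∑ r : Fin n, sch.pR r := sch.sum_one.symm
      _ ≤ ∑ _r : Fin n, (1/8 : ℝ) := Finset.sum_le_sum fun r _ => key r
      _ = (n : ℝ) * (1/8) := by
          rw [Finset.sum_const, Finset.card_univ, Fintype.card_fin, nsmul_eq_mul]
  have : (8:ℝ) ≤ (n:ℝ) := by linarith
  exact_mod_cast this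
end LB

def shareFun (x : Bool × Bool × Bool) (r : Fin 8) :
    (Bool × Bool) × (Bool × Bool) × (Bool × Bool) :=
  ((r.val.testBit 0, xor x.2.1 (r.val.testBit 1)),
   (r.val.testBit 1, xor x.2.2 (r.val.testBit 2)),
   (r.val.testBit 2, xor x.1 (r.val.testBit 0)))

/-- the explicit 3-bit scheme -/
noncomputable def goodScheme :
    Scheme (Bool × Bool × Bool) (Bool × Bool) (Bool × Bool) (Bool × Bool) (Fin 8) where
  pR := fun _ => (1 : ℝ) / 8
  nonneg := fun _ => by norm_num
  sum_one := by simp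
  share := shareFun

lemma goodScheme_sum_card {T : Type} [DecidableEq T] (f : Fin 8 → T) (v : T) :
    (∑ r, if f r = v then (1:ℝ)/8 else 0)
      = ((Finset.univ.filter fun r => f r = v).card : ℝ) * (1/8) := by
  classical
  rw [← Finset.sum_filter, Finset.sum_const, nsmul_eq_mul]

lemma probV1_good (x : Bool × Bool × Bool) (v : (Bool × Bool) × (Bool × Bool)) :
    probV1 goodScheme x v
      = ((Finset.univ.filter fun r : Fin 8 => view1 (shareFun x r) = v).card : ℝ) * (1/8) := by
  unfold probV1
  trans (∑ r : Fin 8, if view1 (shareFun x r) = v then (1:ℝ)/8 else 0)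
  · exact Finset.sum_congr rfl fun r _ => ite_irrel _ _
  · exact goodScheme_sum_card _ v

lemma probV2_good (x : Bool × Bool × Bool) (v : (Bool × Bool) × (Bool × Bool)) :
    probV2 goodScheme x v
      = ((Finset.univ.filter fun r : Fin 8 => view2 (shareFun x r) = v).card : ℝ) * (1/8) := by
  unfold probV2
  trans (∑ r : Fin 8, if view2 (shareFun x r) = v then (1:ℝ)/8 else 0)
  · exact Finset.sum_congr rfl fun r _ => ite_irrel _ _
  · exact goodScheme_sum_card _ v

lemma probV3_good (x : Bool × Bool × Bool) (v : (Bool × Bool) × (Bool × Bool)) :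
    probV3 goodScheme x v
      = ((Finset.univ.filter fun r : Fin 8 => view3 (shareFun x r) = v).card : ℝ) * (1/8) := by
  unfold probV3
  trans (∑ r : Fin 8, if view3 (shareFun x r) = v then (1:ℝ)/8 else 0)
  · exact Finset.sum_congr rfl fun r _ => ite_irrel _ _
  · exact goodScheme_sum_card _ v

lemma goodScheme_Is3SS : Is3SS (Set.univ : Set (Bool × Bool × Bool)) goodScheme := by
  refine ⟨⟨fun v => xor v.1.1 v.2.2, ?_⟩, ⟨fun v => xor v.1.1 v.2.2, ?_⟩,
    ⟨fun v => xor v.1.1 v.2.2, ?_⟩, ?_, ?_, ?_⟩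
  · intro x hx r hr; clear hx hr; revert x r
    show ∀ (x : Bool × Bool × Bool) (r : Fin 8),
      (fun v : (Bool × Bool) × Bool × Bool => xor v.1.1 v.2.2) (view1 (shareFun x r)) = x.1
    decide
  · intro x hx r hr; clear hx hr; revert x r
    show ∀ (x : Bool × Bool × Bool) (r : Fin 8),
      (fun v : (Bool × Bool) × Bool × Bool => xor v.1.1 v.2.2) (view2 (shareFun x r)) = x.2.1
    decide
  · intro x hx r hr; clear hx hr; revert x r
    show ∀ (x : Bool × Bool × Bool) (r : Fin 8),
      (fun v : (Bool × Bool) × Bool × Bool => xor v.1.1 v.2.2) (view3 (shareFun x r)) = x.2.2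
    decide
  · intro x _ x' _ hxx v
    rw [probV1_good, probV1_good]
    have hcard : ∀ (x x' : Bool × Bool × Bool), x.1 = x'.1 →
        ∀ v : (Bool × Bool) × (Bool × Bool),
        (Finset.univ.filter fun r : Fin 8 => view1 (shareFun x r) = v).card
          = (Finset.univ.filter fun r : Fin 8 => view1 (shareFun x' r) = v).card := by decide
    rw [hcard x x' hxx v]
  · intro x _ x' _ hxx v
    rw [probV2_good, probV2_good]
    have hcard : ∀ (x x' : Bool × Bool × Bool), x.2.1 = x'.2.1 →
        ∀ v : (Bool × Bool) × (Bool × Bool),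
        (Finset.univ.filter fun r : Fin 8 => view2 (shareFun x r) = v).card
          = (Finset.univ.filter fun r : Fin 8 => view2 (shareFun x' r) = v).card := by decide
    rw [hcard x x' hxx v]
  · intro x _ x' _ hxx v
    rw [probV3_good, probV3_good]
    have hcard : ∀ (x x' : Bool × Bool × Bool), x.2.2 = x'.2.2 →
        ∀ v : (Bool × Bool) × (Bool × Bool),
        (Finset.univ.filter fun r : Fin 8 => view3 (shareFun x r) = v).card
          = (Finset.univ.filter fun r : Fin 8 => view3 (shareFun x' r) = v).card := by decide
    rw [hcard x x' hxx v]

/-- For the full domain `S = {0,1}³`, the randomness complexity is exactly 3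
bits: three independent uniform bits suffice, and no 3SS scheme for `S` uses
fewer than 3 bits of randomness. -/
theorem rho_full_cube : rho (Set.univ : Set (Bool × Bool × Bool)) = 3 := by
  have l8 : Real.logb 2 ((8:ℕ) : ℝ) = 3 := by
    rw [show ((8:ℕ):ℝ) = 2 ^ (3:ℕ) by norm_num, Real.logb_pow]
    simp
  have mem3 : (3:ℝ) ∈ { t : ℝ | ∃ (n : ℕ) (A B C : Type)
      (sch : Scheme (Bool × Bool × Bool) A B C (Fin n)),
      Is3SS (Set.univ : Set (Bool × Bool × Bool)) sch ∧ t = Real.logb 2 n } := by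
    exact ⟨8, Bool × Bool, Bool × Bool, Bool × Bool, goodScheme, goodScheme_Is3SS, l8.symm⟩
  have lb : ∀ t ∈ { t : ℝ | ∃ (n : ℕ) (A B C : Type)
      (sch : Scheme (Bool × Bool × Bool) A B C (Fin n)),
      Is3SS (Set.univ : Set (Bool × Bool × Bool)) sch ∧ t = Real.logb 2 n }, (3:ℝ) ≤ t := by
    rintro t ⟨n, A, B, C, sch, hsch, rfl⟩
    have h8 : 8 ≤ n := lower_bound sch hsch
    calc (3:ℝ) = Real.logb 2 ((8:ℕ) : ℝ) := l8.symm
      _ ≤ Real.logb 2 (n : ℝ) := by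
          apply Real.logb_le_logb_of_le (by norm_num) (by norm_num)
          exact_mod_cast h8
  unfold rho
  exact le_antisymm (csInf_le ⟨3, lb⟩ mem3) (le_csInf ⟨3, mem3⟩ lb)
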